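/- Let p, q ∈ (0,1) and let z be real with −p < z < min{1, p/q}. Set c² = p·(p + z − p·z − q·z)/(p + q − p·q − q·z). Then the denominator p + q − p·q − q·z is positive, and max{p², z²} < c² < 1. -/
import Mathlib


theorem c_squared_bounds (p q z : ℝ) (hp0 : 0 < p) (hp1 : p < 1) (hq0 : 0 < q) (hq1 : q < 1)
    (hz1 : -p < z) (hz2 : z < min 1 (p / q)) :
    0 < p + q - p * q - q * z ∧
    max (p ^ 2) (z ^ 2) < p * (p + z - p * z - q * z) / (p + q - p * q - q * z) ∧
    p * (p + z - p * z - q * z) / (p + q - p * q - q * z) < 1 := by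
  have h1 : z < 1 := lt_of_lt_of_le hz2 (min_le_left _ _)
  have h2 : q * z < p := by
    have := lt_of_lt_of_le hz2 (min_le_right _ _)
    calc q * z < q * (p / q) := by exact mul_lt_mul_of_pos_left this hq0
    _ = p := by field_simp
  have hden : 0 < p + q - p * q - q * z := by nlinarith
  refine ⟨hden, ?_, ?_⟩
  · rw [max_lt_iff, lt_div_iff₀ hden, lt_div_iff₀ hden]
    constructor
    · nlinarith [mul_pos hp0 (mul_pos (sub_pos.2 hp1) (mul_pos (by linarith : (0:ℝ) < p + z) (sub_pos.2 hq1)))]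
    · nlinarith [mul_pos (sub_pos.2 h1) (mul_pos (by linarith : (0:ℝ) < p + z) (sub_pos.2 h2))]
  · rw [div_lt_one hden]
    nlinarith [mul_pos (sub_pos.2 h1) (mul_pos (sub_pos.2 hp1) (by linarith : (0:ℝ) < p + q))]
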